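/- Isotropy of the cross-section element: let f = ε + κ + Z where ε = ∑ e_{i,i+1}, κ is a diagonal matrix with κ_{r} = κ_{n-r+1} for all r, and Z = ∑_{r=1}^{⌊n/2⌋} e_{n-r+1,r}. Then for any positive diagonal matrix a with a_r = a_{n-r+1} for all r (i.e., a ∈ A_◇), one has π_{ε+𝔟_-}(a^{-1} f a) = f, where π projects onto ε plus the lower triangular part; i.e., A_◇ is contained in the coadjoint isotropy of f. -/

import Mathlib

open Matrix

/-- The principal nilpotent `ε = ∑ e_{i,i+1}`. -/
def epsMat (n : ℕ) : Matrix (Fin n) (Fin n) ℝ :=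
  Matrix.of fun i j => if (j : ℕ) = (i : ℕ) + 1 then 1 else 0

/-- The anti-diagonal element `Z = ∑_{r=1}^{⌊n/2⌋} e_{n-r+1,r}`: in 0-based indices the
entries at positions `(n-1-j, j)` with `2j < n-1` equal `1`. -/
def zMat (n : ℕ) : Matrix (Fin n) (Fin n) ℝ :=
  Matrix.of fun i j => if (i : ℕ) = n - 1 - (j : ℕ) ∧ 2 * (j : ℕ) < n - 1 then 1 else 0

/-- Projection onto the lower triangular part (diagonal included), i.e. onto `𝔟_-`. -/
def lowTriProj (n : ℕ) (Y : Matrix (Fin n) (Fin n) ℝ) : Matrix (Fin n) (Fin n) ℝ :=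
  Matrix.of fun i j => if (j : ℕ) ≤ (i : ℕ) then Y i j else 0

/-- isotropy of the cross-section element `f = ε + κ + Z`.  For any
positive diagonal matrix `a = diag(v)` with `v_r = v_{n-r+1}` (i.e. `a ∈ A_◇`), we have
`π_{ε+𝔟_-}(a⁻¹ f a) = f`, where `κ = diag(k)` with `k_r = k_{n-r+1}`. -/
theorem crossSection_isotropy (n : ℕ) (v k : Fin n → ℝ)
    (hv : ∀ i, 0 < v i)
    (hvsym : ∀ i : Fin n, v i = v ⟨n - 1 - (i : ℕ), by have := i.isLt; omega⟩)
    (hksym : ∀ i : Fin n, k i = k ⟨n - 1 - (i : ℕ), by have := i.isLt; omega⟩) :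
    epsMat n +
      lowTriProj n
        ((Matrix.diagonal fun i => (v i)⁻¹) *
          (epsMat n + Matrix.diagonal k + zMat n) * Matrix.diagonal v) =
    epsMat n + Matrix.diagonal k + zMat n := by
  have key : ∀ i j : Fin n,
      ((Matrix.diagonal fun i => (v i)⁻¹) *
        (epsMat n + Matrix.diagonal k + zMat n) * Matrix.diagonal v) i j
      = (v i)⁻¹ * (epsMat n + Matrix.diagonal k + zMat n) i j * v j := by
    intro i j
    rw [Matrix.mul_diagonal, Matrix.diagonal_mul]
  ext i j
  simp only [Matrix.add_apply, lowTriProj, Matrix.of_apply, key]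
  by_cases hle : (j : ℕ) ≤ (i : ℕ)
  · simp only [hle, if_true]
    by_cases hij : i = j
    · subst hij
      have h1 : ¬ ((i : ℕ) = (i : ℕ) + 1) := by omega
      by_cases hz : (i : ℕ) = n - 1 - (i : ℕ) ∧ 2 * (i : ℕ) < n - 1
      · omega
      · simp only [epsMat, zMat, Matrix.of_apply, Matrix.add_apply,
          Matrix.diagonal_apply_eq, h1, hz, if_false]
        field_simp
        simp only [zero_add, add_zero]
        rw [mul_comm (v i) (k i), mul_div_assoc, div_self (hv i).ne', mul_one]
    · have h1 : ¬ ((j : ℕ) = (i : ℕ) + 1) := by omega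
      simp only [epsMat, zMat, Matrix.of_apply, Matrix.add_apply, h1, if_false,
        Matrix.diagonal_apply_ne _ hij, zero_add, add_zero]
      by_cases hz : (i : ℕ) = n - 1 - (j : ℕ) ∧ 2 * (j : ℕ) < n - 1
      · have hvij : v i = v j := by
          have := hvsym j
          have hfin : (⟨n - 1 - (j : ℕ), by have := j.isLt; omega⟩ : Fin n) = i :=
            Fin.ext (by simp [hz.1])
          rw [hfin] at this; exact this.symm
        simp only [hz, if_true, hvij, mul_one]
        field_simp
        exact div_self (hv j).ne'
      · simp [hz]
  · simp only [hle, if_false]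
    have h1 : ¬ ((i : ℕ) = n - 1 - (j : ℕ) ∧ 2 * (j : ℕ) < n - 1) := by omega
    have h2 : i ≠ j := by intro h; subst h; omega
    simp [epsMat, zMat, Matrix.diagonal_apply_ne _ h2, h1]
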